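/- In the xxy-gauge for the three-body problem, let the body-fixed Jacobi vectors be r⃗₁ = (r₁, 0, 0) and r⃗₂ = (r₂ cos φ, r₂ sin φ, 0) with shape (Jacobi) coordinates (q₁,q₂,q₃) = (r₁, r₂, φ), where r₁ > 0, r₂ > 0 and 0 < φ < π. Then: (a) the moment of inertia operator 𝕀u = r⃗₁ × (u × r⃗₁) + r⃗₂ × (u × r⃗₂) has matrix [[r₂² sin²φ, −r₂² sinφ cosφ, 0], [−r₂² sinφ cosφ, r₁² + r₂² cos²φ, 0], [0, 0, r₁² + r₂²]] and is invertible; (b) the mechanical connection vectors are A_{r₁} = A_{r₂} = (0,0,0) and A_φ = (0, 0, r₂²/(r₁² + r₂²)); (c) the horizontal metric matrix (d_{αβ}) = (h_{αβ} − A_α·(𝕀A_β)) is diag(1, 1, r₁²r₂²/(r₁² + r₂²)). -/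

import Mathlib

open scoped BigOperators Matrix

infixl:74 " ×₃ " => crossProduct

/-- Partial derivative `∂r/∂q_α` with respect to the shape coordinate `q_α`. -/
noncomputable def pdq (r : (Fin 3 → ℝ) → (Fin 3 → ℝ)) (q : Fin 3 → ℝ) (α : Fin 3) :
    Fin 3 → ℝ :=
  fderiv ℝ r q (Pi.single α 1)

/-- The moment of inertia operator `𝕀u = r₁ × (u × r₁) + r₂ × (u × r₂)`. -/
def inertiaOp (r₁ r₂ : (Fin 3 → ℝ) → (Fin 3 → ℝ)) (q u : Fin 3 → ℝ) : Fin 3 → ℝ :=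
  (r₁ q) ×₃ (u ×₃ (r₁ q)) + (r₂ q) ×₃ (u ×₃ (r₂ q))

/-- Euclidean dot product on `ℝ³`. -/
def dot3 (u v : Fin 3 → ℝ) : ℝ := ∑ i : Fin 3, u i * v i

/-- The body-fixed Jacobi vector `r⃗₁ = (r₁, 0, 0)` in the `xxy`-gauge. -/
noncomputable def R1 : (Fin 3 → ℝ) → (Fin 3 → ℝ) := fun q => ![q 0, 0, 0]

/-- The body-fixed Jacobi vector `r⃗₂ = (r₂ cos φ, r₂ sin φ, 0)` in the `xxy`-gauge. -/
noncomputable def R2 : (Fin 3 → ℝ) → (Fin 3 → ℝ) := fun q =>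
  ![q 1 * Real.cos (q 2), q 1 * Real.sin (q 2), 0]

/-- Projection onto the `i`-th coordinate as a continuous linear map. -/
noncomputable def pr (i : Fin 3) : (Fin 3 → ℝ) →L[ℝ] ℝ := ContinuousLinearMap.proj i

lemma hasFDerivAt_R1 (q : Fin 3 → ℝ) :
    HasFDerivAt R1 (ContinuousLinearMap.pi ![pr 0, 0, 0]) q := by
  apply hasFDerivAt_pi''
  intro i
  rw [ContinuousLinearMap.proj_pi]
  fin_cases i
  · exact hasFDerivAt_apply 0 q
  · exact hasFDerivAt_const 0 q
  · exact hasFDerivAt_const 0 q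

lemma hasFDerivAt_R2 (q : Fin 3 → ℝ) :
    HasFDerivAt R2 (ContinuousLinearMap.pi
      ![q 1 • ((-Real.sin (q 2)) • pr 2) + Real.cos (q 2) • pr 1,
        q 1 • (Real.cos (q 2) • pr 2) + Real.sin (q 2) • pr 1,
        0]) q := by
  apply hasFDerivAt_pi''
  intro i
  rw [ContinuousLinearMap.proj_pi]
  fin_cases i
  · exact (hasFDerivAt_apply 1 q).mul
      (by have := (Real.hasDerivAt_cos (q 2)).comp_hasFDerivAt q
            (hasFDerivAt_apply 2 q : HasFDerivAt (fun f : Fin 3 → ℝ => f 2) (pr 2) q)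
          exact this)
  · exact (hasFDerivAt_apply 1 q).mul
      (by have := (Real.hasDerivAt_sin (q 2)).comp_hasFDerivAt q
            (hasFDerivAt_apply 2 q : HasFDerivAt (fun f : Fin 3 → ℝ => f 2) (pr 2) q)
          exact this)
  · exact hasFDerivAt_const 0 q

lemma pdq_R1 (q : Fin 3 → ℝ) (α : Fin 3) :
    pdq R1 q α = ![(Pi.single α (1:ℝ) : Fin 3 → ℝ) 0, 0, 0] := by
  rw [pdq, (hasFDerivAt_R1 q).fderiv]
  funext i
  fin_cases i <;>
    simp [ContinuousLinearMap.pi_apply, pr]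

lemma pdq_R2 (q : Fin 3 → ℝ) (α : Fin 3) :
    pdq R2 q α = ![(Pi.single α (1:ℝ) : Fin 3 → ℝ) 1 * Real.cos (q 2)
        - q 1 * Real.sin (q 2) * (Pi.single α (1:ℝ) : Fin 3 → ℝ) 2,
      (Pi.single α (1:ℝ) : Fin 3 → ℝ) 1 * Real.sin (q 2)
        + q 1 * Real.cos (q 2) * (Pi.single α (1:ℝ) : Fin 3 → ℝ) 2, 0] := by
  rw [pdq, (hasFDerivAt_R2 q).fderiv]
  funext i
  fin_cases i <;>
    simp [ContinuousLinearMap.pi_apply, pr] <;> ring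

lemma fin3_mk0 (h : 0 < 3) : (⟨0, h⟩ : Fin 3) = 0 := rfl
lemma fin3_mk1 (h : 1 < 3) : (⟨1, h⟩ : Fin 3) = 1 := rfl
lemma fin3_mk2 (h : 2 < 3) : (⟨2, h⟩ : Fin 3) = 2 := rfl

/-- In the `xxy`-gauge with Jacobi shape coordinates
`(r₁, r₂, φ)`: (a) the inertia operator has the stated matrix form and is
invertible; (b) the mechanical connection vectors are `A_{r₁} = A_{r₂} = 0` and
`A_φ = (0, 0, r₂²/(r₁²+r₂²))`; (c) the horizontal metric is
`diag(1, 1, r₁²r₂²/(r₁²+r₂²))`. -/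
theorem xxy_gauge_inertia_connection_metric
    (r₁ r₂ φ : ℝ) (hr₁ : 0 < r₁) (hr₂ : 0 < r₂) (hφ₀ : 0 < φ) (hφπ : φ < Real.pi)
    (q : Fin 3 → ℝ) (hq : q = ![r₁, r₂, φ])
    (Imat : Matrix (Fin 3) (Fin 3) ℝ)
    (hImat : Imat = !![r₂ ^ 2 * Real.sin φ ^ 2, -(r₂ ^ 2 * Real.sin φ * Real.cos φ), 0;
        -(r₂ ^ 2 * Real.sin φ * Real.cos φ), r₁ ^ 2 + r₂ ^ 2 * Real.cos φ ^ 2, 0;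
        0, 0, r₁ ^ 2 + r₂ ^ 2])
    (A : Fin 3 → Fin 3 → ℝ)
    (hA : ∀ α, A α = Imat⁻¹.mulVec
      ((R1 q) ×₃ (pdq R1 q α) + (R2 q) ×₃ (pdq R2 q α)))
    (d : Fin 3 → Fin 3 → ℝ)
    (hd : ∀ α β, d α β =
      (dot3 (pdq R1 q α) (pdq R1 q β) + dot3 (pdq R2 q α) (pdq R2 q β))
        - dot3 (A α) (Imat.mulVec (A β))) :
    (∀ u : Fin 3 → ℝ, inertiaOp R1 R2 q u = Imat.mulVec u) ∧
    IsUnit Imat ∧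
    (A 0 = ![0, 0, 0] ∧ A 1 = ![0, 0, 0] ∧
      A 2 = ![0, 0, r₂ ^ 2 / (r₁ ^ 2 + r₂ ^ 2)]) ∧
    (∀ α β, d α β =
      Matrix.diagonal ![1, 1, r₁ ^ 2 * r₂ ^ 2 / (r₁ ^ 2 + r₂ ^ 2)] α β) := by
  have hs : 0 < Real.sin φ := Real.sin_pos_of_pos_of_lt_pi hφ₀ hφπ
  have hsc : Real.sin φ ^ 2 + Real.cos φ ^ 2 = 1 := Real.sin_sq_add_cos_sq φ
  have hc2 : Real.cos φ ^ 2 = 1 - Real.sin φ ^ 2 := by linarith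
  have hrr : (0:ℝ) < r₁ ^ 2 + r₂ ^ 2 := by positivity
  -- determinant
  have hdet : Imat.det = r₁ ^ 2 * r₂ ^ 2 * Real.sin φ ^ 2 * (r₁ ^ 2 + r₂ ^ 2) := by
    rw [hImat, Matrix.det_fin_three]; norm_num [Matrix.cons_val_one, Matrix.cons_val_two, Matrix.vecHead, Matrix.vecTail]; ring
  have hdet0 : Imat.det ≠ 0 := by rw [hdet]; positivity
  have hUnit : IsUnit Imat := by
    rw [Matrix.isUnit_iff_isUnit_det]; exact isUnit_iff_ne_zero.2 hdet0
  -- part (a)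
  have hpartA : ∀ u : Fin 3 → ℝ, inertiaOp R1 R2 q u = Imat.mulVec u := by
    intro u
    funext i
    fin_cases i <;>
      · simp [inertiaOp, R1, R2, hq, hImat, cross_apply, Matrix.mulVec,
          dotProduct, Fin.sum_univ_three]
        try first
        | ring1
        | linear_combination u 2 * r₂ ^ 2 * hsc
  -- the cross-product vectors b α
  have hb0 : (R1 q) ×₃ (pdq R1 q 0) + (R2 q) ×₃ (pdq R2 q 0) = ![0,0,0] := by
    funext i
    rw [pdq_R1, pdq_R2]
    fin_cases i <;>
      simp [hq, R1, R2, cross_apply, Pi.single_apply] <;> ring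
  have hb1 : (R1 q) ×₃ (pdq R1 q 1) + (R2 q) ×₃ (pdq R2 q 1) = ![0,0,0] := by
    funext i
    rw [pdq_R1, pdq_R2]
    fin_cases i <;>
      simp [hq, R1, R2, cross_apply, Pi.single_apply] <;> ring
  have hb2 : (R1 q) ×₃ (pdq R1 q 2) + (R2 q) ×₃ (pdq R2 q 2) = ![0,0,r₂ ^ 2] := by
    funext i
    rw [pdq_R1, pdq_R2]
    fin_cases i <;>
      · simp [hq, R1, R2, cross_apply, Pi.single_apply]
        try first
        | ring1
        | linear_combination r₂ ^ 2 * hsc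
  -- zero vector fact
  have hz : (![0,0,0] : Fin 3 → ℝ) = 0 := by
    funext i; fin_cases i <;> simp
  have hA0 : A 0 = ![0,0,0] := by
    rw [hA 0, hb0, hz, Matrix.mulVec_zero]
  have hA1 : A 1 = ![0,0,0] := by
    rw [hA 1, hb1, hz, Matrix.mulVec_zero]
  -- A 2
  have hIA2 : Imat.mulVec ![0, 0, r₂ ^ 2 / (r₁ ^ 2 + r₂ ^ 2)] = ![0,0,r₂ ^ 2] := by
    funext i
    fin_cases i <;>
      · simp [hImat, Matrix.mulVec, dotProduct, Fin.sum_univ_three]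
        try field_simp
  have hA2 : A 2 = ![0, 0, r₂ ^ 2 / (r₁ ^ 2 + r₂ ^ 2)] := by
    rw [hA 2, hb2, ← hIA2, Matrix.mulVec_mulVec, Matrix.nonsing_inv_mul Imat (isUnit_iff_ne_zero.2 hdet0),
      Matrix.one_mulVec]
  -- part (c)
  refine ⟨hpartA, hUnit, ⟨hA0, hA1, hA2⟩, ?_⟩
  intro α β
  have hIA0 : Imat.mulVec (A 0) = 0 := by rw [hA0, hz, Matrix.mulVec_zero]
  have hIA1 : Imat.mulVec (A 1) = 0 := by rw [hA1, hz, Matrix.mulVec_zero]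
  have hIA2' : Imat.mulVec (A 2) = ![0,0,r₂ ^ 2] := by rw [hA2, hIA2]
  fin_cases α <;> fin_cases β <;>
    · rw [hd]
      simp only [pdq_R1, pdq_R2]
      simp [hA0, hA1, hA2, hIA0, hIA1, hIA2', hIA2, hz, dot3, Fin.sum_univ_three, hq,
        Pi.single_apply, Matrix.diagonal]
      try first
      | ring1
      | linear_combination hsc
      | linear_combination r₂ ^ 2 * hsc
      | (rw [show r₂ * Real.cos φ * (r₂ * Real.cos φ) = r₂ ^ 2 * (1 - Real.sin φ ^ 2) by
            rw [← hc2]; ring]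
         field_simp
         ring)
      | (field_simp
         first
         | ring1
         | linear_combination (r₂ ^ 2 * (r₁ ^ 2 + r₂ ^ 2)) * hsc
         | linear_combination r₂ ^ 2 * hsc
         | linear_combination hsc)
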